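/- Let q : ℝ^d × ℝ → ℝ be continuously differentiable and strictly positive, let f : ℝ^d × ℝ → ℝ^d be continuously differentiable, and suppose q satisfies the continuity equation ∂q/∂t(x,t) = −div_x(q(x,t)·f(x,t)) for all (x,t). If x : ℝ → ℝ^d is differentiable with x'(t) = f(x(t), t) for all t, then for every t the function t ↦ log q(x(t), t) is differentiable with derivative equal to −(div_x f)(x(t), t), where div_x f = Σᵢ ∂fᵢ/∂xᵢ. -/

import Mathlib

/-- Divergence in the spatial variable of a time-dependent vector field on ℝ^d:
`div_x v (x, t) = Σᵢ ∂vᵢ/∂xᵢ (x, t)`. -/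
noncomputable def spatialDiv {d : ℕ} (v : (Fin d → ℝ) × ℝ → (Fin d → ℝ))
    (x : Fin d → ℝ) (t : ℝ) : ℝ :=
  ∑ i, fderiv ℝ (fun y : Fin d → ℝ => v (y, t) i) x (Pi.single i 1)

/-- If a strictly positive `C¹` density `q` satisfies the continuity equation
`∂q/∂t = −div_x (q f)` for a `C¹` velocity field `f`, and `x(·)` is a trajectory of the flow,
then `t ↦ log q(x(t), t)` is differentiable with derivative `−(div_x f)(x(t), t)`. -/
theorem log_density_material_derivative {d : ℕ}
    (q : (Fin d → ℝ) × ℝ → ℝ) (f : (Fin d → ℝ) × ℝ → (Fin d → ℝ))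
    (hq : ContDiff ℝ 1 q) (hqpos : ∀ p, 0 < q p)
    (hf : ContDiff ℝ 1 f)
    (hcont : ∀ (x : Fin d → ℝ) (t : ℝ),
      deriv (fun s => q (x, s)) t
        = -(spatialDiv (fun p => q p • f p) x t))
    (x : ℝ → (Fin d → ℝ)) (hx : ∀ t, HasDerivAt x (f (x t, t)) t) :
    ∀ t : ℝ, HasDerivAt (fun s => Real.log (q (x s, s)))
      (-(spatialDiv f (x t) t)) t := by
  intro t
  have hqd : Differentiable ℝ q := hq.differentiable one_ne_zero
  have hfd : Differentiable ℝ f := hf.differentiable one_ne_zero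
  set X := x t with hXdef
  set Q := q (X, t) with hQdef
  set F := f (X, t) with hFdef
  set L := fderiv ℝ q (X, t) with hLdef
  have hL : HasFDerivAt q L (X, t) := (hqd (X, t)).hasFDerivAt
  -- derivative along the trajectory
  have hxt : HasDerivAt (fun s => (x s, s)) (F, (1 : ℝ)) t := (hx t).prodMk (hasDerivAt_id t)
  have hD : HasDerivAt (fun s => q (x s, s)) (L (F, 1)) t :=
    hL.comp_hasDerivAt_of_eq t hxt rfl
  -- spatial slices
  have hqt : Differentiable ℝ (fun y : Fin d → ℝ => q (y, t)) :=
    hqd.comp (differentiable_id.prodMk (differentiable_const t))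
  have hft : Differentiable ℝ (fun y : Fin d → ℝ => f (y, t)) :=
    hfd.comp (differentiable_id.prodMk (differentiable_const t))
  have hfti : ∀ i, Differentiable ℝ (fun y : Fin d → ℝ => f (y, t) i) := fun i =>
    (differentiable_pi.mp hft) i
  have hslice : ∀ v : Fin d → ℝ, fderiv ℝ (fun y => q (y, t)) X v = L (v, 0) := by
    intro v
    have h1 : HasFDerivAt (fun y : Fin d → ℝ => (y, t))
        (ContinuousLinearMap.inl ℝ (Fin d → ℝ) ℝ) X := hasFDerivAt_prodMk_left X t
    have h2 : HasFDerivAt (fun y : Fin d → ℝ => q (y, t))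
        (L.comp (ContinuousLinearMap.inl ℝ (Fin d → ℝ) ℝ)) X := hL.comp X h1
    rw [h2.fderiv]; rfl
  -- time slice
  have htime : deriv (fun s => q (X, s)) t = L (0, 1) := by
    have h1 : HasDerivAt (fun s : ℝ => (X, s)) ((0 : Fin d → ℝ), (1 : ℝ)) t :=
      (hasDerivAt_const t X).prodMk (hasDerivAt_id t)
    exact (hL.comp_hasDerivAt t h1).deriv
  -- decompose F as combination of basis vectors
  have hFsum : F = ∑ i, F i • (Pi.single i 1 : Fin d → ℝ) := by
    ext j
    simp [Finset.sum_apply, Pi.single_apply, mul_ite]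
  have hgradF : fderiv ℝ (fun y => q (y, t)) X F
      = ∑ i, F i * fderiv ℝ (fun y => q (y, t)) X (Pi.single i 1) := by
    conv_lhs => rw [hFsum]
    rw [map_sum]
    simp [smul_eq_mul]
  -- product rule for the divergence of q • f
  have hprod : spatialDiv (fun p => q p • f p) X t
      = fderiv ℝ (fun y => q (y, t)) X F + Q * spatialDiv f X t := by
    have hterm : ∀ i, fderiv ℝ (fun y : Fin d → ℝ => (q (y, t) • f (y, t)) i) X (Pi.single i 1)
        = Q * fderiv ℝ (fun y => f (y, t) i) X (Pi.single i 1)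
          + F i * fderiv ℝ (fun y => q (y, t)) X (Pi.single i 1) := by
      intro i
      have : (fun y : Fin d → ℝ => (q (y, t) • f (y, t)) i)
          = fun y => q (y, t) * f (y, t) i := by
        ext y; simp
      rw [this, fderiv_fun_mul (hqt X) ((hfti i) X)]
      simp [hQdef, hFdef, mul_comm]
    unfold spatialDiv
    simp only [hterm]
    rw [Finset.sum_add_distrib, ← Finset.mul_sum, hgradF]
    ring
  -- compute L (F, 1)
  have hD1 : L (F, 1) = -(Q * spatialDiv f X t) := by
    have hsplit : ((F, (1 : ℝ)) : (Fin d → ℝ) × ℝ) = (F, 0) + (0, 1) := by simp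
    rw [hsplit, map_add, ← hslice F, ← htime, hcont X t, hprod]
    ring
  -- chain rule with log
  have hlog : HasDerivAt (fun s => Real.log (q (x s, s))) (Q⁻¹ * L (F, 1)) t :=
    by exact (Real.hasDerivAt_log (ne_of_gt (hqpos (X, t)))).comp t hD
  have hQne : Q ≠ 0 := ne_of_gt (hqpos (X, t))
  have : Q⁻¹ * L (F, 1) = -(spatialDiv f X t) := by
    rw [hD1]; field_simp
  rwa [this] at hlog
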